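/- Let P be an irreducible upward skip-free transition matrix on ℕ. Then P is transient (i.e., G(i,j) < ∞ for all i,j) if and only if ∑_{n=0}^∞ F_n^{(0)} < ∞. -/

import Mathlib

open scoped ENNReal
open Filter Topology

/-- Matrix powers of a nonnegative kernel on ℕ, values in `[0,∞]`. -/
noncomputable def matPow (P : ℕ → ℕ → ℝ≥0∞) : ℕ → ℕ → ℕ → ℝ≥0∞
  | 0, i, j => if i = j then 1 else 0
  | k + 1, i, j => ∑' l : ℕ, matPow P k i l * P l j

/-- A transition matrix on ℕ: rows sum to one. -/
def IsTransitionMatrix (P : ℕ → ℕ → ℝ≥0∞) : Prop :=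
  ∀ i, ∑' j : ℕ, P i j = 1

/-- Irreducibility: every state reaches every state. -/
def MCIrreducible (P : ℕ → ℕ → ℝ≥0∞) : Prop :=
  ∀ i j : ℕ, ∃ k : ℕ, 0 < matPow P k i j

/-- Upward skip-free: `P(i,i+1) > 0` and `P(i,k) = 0` for `k ≥ i+2`. -/
def UpwardSkipFree (P : ℕ → ℕ → ℝ≥0∞) : Prop :=
  (∀ i : ℕ, 0 < P i (i + 1)) ∧ ∀ i k : ℕ, i + 2 ≤ k → P i k = 0

/-- The Green matrix `G(i,j) = ∑_{k=0}^∞ P^k(i,j)`. -/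
noncomputable def green (P : ℕ → ℕ → ℝ≥0∞) (i j : ℕ) : ℝ≥0∞ :=
  ∑' k : ℕ, matPow P k i j

/-- `P_n^{(k-)} = ∑_{i=0}^k P(n,i)`. -/
noncomputable def Pminus (P : ℕ → ℕ → ℝ≥0∞) (n k : ℕ) : ℝ≥0∞ :=
  ∑ l ∈ Finset.range (k + 1), P n l

/-- `F P i n = F_n^{(i)}`: `F_i^{(i)} = 1` and
`F_n^{(i)} = (1/P(n,n+1)) ∑_{k=i}^{n-1} P_n^{(k-)} F_k^{(i)}` for `i < n`. -/
noncomputable def F (P : ℕ → ℕ → ℝ≥0∞) (i : ℕ) : ℕ → ℝ≥0∞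
  | n =>
    if n ≤ i then 1
    else (P n (n + 1))⁻¹ *
      ∑ k ∈ (Finset.Ico i n).attach, Pminus P n k.1 * F P i k.1
  termination_by n => n
  decreasing_by
    have h := Finset.mem_Ico.mp k.2
    omega

namespace USF

/-! ### Basic lemmas on `matPow` -/

lemma matPow_zero (P : ℕ → ℕ → ℝ≥0∞) (i j : ℕ) :
    matPow P 0 i j = if i = j then 1 else 0 := rfl

lemma matPow_succ (P : ℕ → ℕ → ℝ≥0∞) (k i j : ℕ) :
    matPow P (k + 1) i j = ∑' l : ℕ, matPow P k i l * P l j := rfl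

lemma tsum_ite_one (v : ℕ → ℝ≥0∞) (i : ℕ) :
    ∑' j : ℕ, (if i = j then (1 : ℝ≥0∞) else 0) * v j = v i := by
  rw [tsum_eq_single i]
  · simp
  · intro j hj
    simp [Ne.symm hj]

lemma matPow_add (P : ℕ → ℕ → ℝ≥0∞) (a b i j : ℕ) :
    matPow P (a + b) i j = ∑' l : ℕ, matPow P a i l * matPow P b l j := by
  induction b generalizing j with
  | zero =>
    simp only [Nat.add_zero, matPow_zero]
    rw [tsum_eq_single j]
    · simp
    · intro l hl; simp [hl]
  | succ b ih =>
    rw [show a + (b + 1) = (a + b) + 1 from rfl, matPow_succ]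
    have h1 : ∀ l, matPow P (a + b) i l * P l j
        = ∑' y : ℕ, matPow P a i y * matPow P b y l * P l j := by
      intro l; rw [ih, ENNReal.tsum_mul_right]
    rw [tsum_congr h1, ENNReal.tsum_comm]
    apply tsum_congr
    intro y
    rw [matPow_succ, ← ENNReal.tsum_mul_left]
    exact tsum_congr fun l => by ring

lemma matPow_one (P : ℕ → ℕ → ℝ≥0∞) (i j : ℕ) : matPow P 1 i j = P i j := by
  rw [matPow_succ]
  exact tsum_ite_one (fun l => P l j) i

lemma matPow_succ_left (P : ℕ → ℕ → ℝ≥0∞) (k i j : ℕ) :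
    matPow P (k + 1) i j = ∑' l : ℕ, P i l * matPow P k l j := by
  rw [show k + 1 = 1 + k by omega, matPow_add]
  exact tsum_congr fun l => by rw [matPow_one]

lemma rowsum (P : ℕ → ℕ → ℝ≥0∞) (hP : IsTransitionMatrix P) (k i : ℕ) :
    ∑' j : ℕ, matPow P k i j = 1 := by
  induction k with
  | zero =>
    rw [tsum_eq_single i]
    · simp [matPow_zero]
    · intro j hj; simp [matPow_zero, Ne.symm hj]
  | succ k ih =>
    have h1 : ∀ j : ℕ, matPow P (k+1) i j = ∑' l : ℕ, matPow P k i l * P l j :=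
      fun j => matPow_succ P k i j
    rw [tsum_congr h1, ENNReal.tsum_comm]
    have h2 : ∀ l : ℕ, ∑' j : ℕ, matPow P k i l * P l j = matPow P k i l := by
      intro l; rw [ENNReal.tsum_mul_left, hP l, mul_one]
    rw [tsum_congr h2, ih]

lemma entry_le_one (P : ℕ → ℕ → ℝ≥0∞) (hP : IsTransitionMatrix P) (k i j : ℕ) :
    matPow P k i j ≤ 1 :=
  (ENNReal.le_tsum j).trans (rowsum P hP k i).le

lemma P_le_one (P : ℕ → ℕ → ℝ≥0∞) (hP : IsTransitionMatrix P) (i j : ℕ) :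
    P i j ≤ 1 :=
  (ENNReal.le_tsum j).trans (hP i).le

/-! ### Skip-free rows are finitely supported -/

lemma row_fin (P : ℕ → ℕ → ℝ≥0∞) (hup : UpwardSkipFree P) (n : ℕ) (v : ℕ → ℝ≥0∞) :
    ∑' j : ℕ, P n j * v j = ∑ j ∈ Finset.range (n + 2), P n j * v j := by
  apply tsum_eq_sum
  intro j hj
  rw [hup.2 n j (by simpa [Finset.mem_range] using Nat.le_of_not_lt (fun h => hj (Finset.mem_range.mpr h))), zero_mul]

lemma rowsum_fin (P : ℕ → ℕ → ℝ≥0∞) (hP : IsTransitionMatrix P)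
    (hup : UpwardSkipFree P) (n : ℕ) :
    ∑ j ∈ Finset.range (n + 2), P n j = 1 := by
  rw [← hP n]
  symm
  apply tsum_eq_sum
  intro j hj
  exact hup.2 n j (by have := Finset.mem_range.not.mp hj; omega)

/-! ### Properties of `F` and the harmonic function `u` -/

lemma Pminus_le_one (P : ℕ → ℕ → ℝ≥0∞) (hP : IsTransitionMatrix P) (n k : ℕ) :
    Pminus P n k ≤ 1 := by
  rw [← hP n]
  exact ENNReal.sum_le_tsum _

lemma F_base (P : ℕ → ℕ → ℝ≥0∞) : F P 0 0 = 1 := by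
  rw [F]; simp

lemma F_succ (P : ℕ → ℕ → ℝ≥0∞) (n : ℕ) (hn : 0 < n) :
    F P 0 n = (P n (n + 1))⁻¹ * ∑ k ∈ Finset.range n, Pminus P n k * F P 0 k := by
  rw [F, if_neg (by omega)]
  congr 1
  rw [Finset.range_eq_Ico]
  exact Finset.sum_attach (Finset.Ico 0 n) fun k => Pminus P n k * F P 0 k

lemma P_diag_ne_top (P : ℕ → ℕ → ℝ≥0∞) (hP : IsTransitionMatrix P) (n : ℕ) :
    P n (n + 1) ≠ ∞ :=
  fun h => by simpa [h] using P_le_one P hP n (n + 1)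

lemma key0 (P : ℕ → ℕ → ℝ≥0∞) (hP : IsTransitionMatrix P) (hup : UpwardSkipFree P)
    (n : ℕ) (hn : 0 < n) :
    P n (n + 1) * F P 0 n = ∑ k ∈ Finset.range n, Pminus P n k * F P 0 k := by
  rw [F_succ P n hn, ← mul_assoc,
    ENNReal.mul_inv_cancel (hup.1 n).ne' (P_diag_ne_top P hP n), one_mul]

lemma F_lt_top (P : ℕ → ℕ → ℝ≥0∞) (hP : IsTransitionMatrix P)
    (hup : UpwardSkipFree P) (n : ℕ) : F P 0 n < ∞ := by
  induction n using Nat.strong_induction_on with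
  | _ n ih =>
    rcases Nat.eq_zero_or_pos n with h0 | h0
    · subst h0; rw [F_base]; exact ENNReal.one_lt_top
    · rw [F_succ P n h0]
      apply ENNReal.mul_lt_top
      · exact ENNReal.inv_lt_top.mpr (hup.1 n)
      · apply (ENNReal.sum_lt_top).mpr
        intro k hk
        exact ENNReal.mul_lt_top ((Pminus_le_one P hP n k).trans_lt ENNReal.one_lt_top)
          (ih k (Finset.mem_range.mp hk))

noncomputable def u (P : ℕ → ℕ → ℝ≥0∞) (n : ℕ) : ℝ≥0∞ :=
  ∑ k ∈ Finset.range n, F P 0 k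

lemma u_zero (P : ℕ → ℕ → ℝ≥0∞) : u P 0 = 0 := by simp [u]

lemma u_one (P : ℕ → ℕ → ℝ≥0∞) : u P 1 = 1 := by simp [u, F_base]

lemma u_succ (P : ℕ → ℕ → ℝ≥0∞) (n : ℕ) : u P (n + 1) = u P n + F P 0 n := by
  simp [u, Finset.sum_range_succ]

lemma u_lt_top (P : ℕ → ℕ → ℝ≥0∞) (hP : IsTransitionMatrix P)
    (hup : UpwardSkipFree P) (n : ℕ) : u P n < ∞ := by
  apply ENNReal.sum_lt_top.mpr
  intro k _
  exact F_lt_top P hP hup k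

/-- Triangle sum swap. -/
lemma tri (g : ℕ → ℕ → ℝ≥0∞) (N : ℕ) :
    ∑ m ∈ Finset.range N, ∑ k ∈ Finset.range (m + 1), g k (m - k)
      = ∑ k ∈ Finset.range N, ∑ d ∈ Finset.range (N - k), g k d := by
  induction N with
  | zero => simp
  | succ N ih =>
    rw [Finset.sum_range_succ, ih]
    conv_rhs => rw [Finset.sum_range_succ]
    have h1 : ∀ k ∈ Finset.range N,
        ∑ d ∈ Finset.range (N + 1 - k), g k d
          = ∑ d ∈ Finset.range (N - k), g k d + g k (N - k) := by
      intro k hk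
      have hk' : k < N := Finset.mem_range.mp hk
      rw [show N + 1 - k = (N - k) + 1 by omega, Finset.sum_range_succ]
    have h2 : N + 1 - N = 1 := by omega
    rw [Finset.sum_congr rfl h1, Finset.sum_add_distrib, h2, Finset.sum_range_one,
      Finset.sum_range_succ (fun k => g k (N - k)), Nat.sub_self]
    ring

lemma u_harm (P : ℕ → ℕ → ℝ≥0∞) (hP : IsTransitionMatrix P)
    (hup : UpwardSkipFree P) (n : ℕ) (hn : 0 < n) :
    ∑ j ∈ Finset.range (n + 2), P n j * u P j = u P n := by
  have hS2 : ∑ k ∈ Finset.range n, Pminus P n k * F P 0 k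
      = ∑ l ∈ Finset.range n, P n l * ∑ d ∈ Finset.range (n - l), F P 0 (l + d) := by
    have e1 : ∀ m ∈ Finset.range n, Pminus P n m * F P 0 m
        = ∑ k ∈ Finset.range (m + 1), P n k * F P 0 (k + (m - k)) := by
      intro m _
      rw [Pminus, Finset.sum_mul]
      apply Finset.sum_congr rfl
      intro l hl
      have h : l + (m - l) = m := by
        have := Finset.mem_range.mp hl; omega
      rw [h]
    calc ∑ k ∈ Finset.range n, Pminus P n k * F P 0 k
        = ∑ m ∈ Finset.range n, ∑ k ∈ Finset.range (m + 1), P n k * F P 0 (k + (m - k)) :=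
          Finset.sum_congr rfl e1
      _ = ∑ k ∈ Finset.range n, ∑ d ∈ Finset.range (n - k), P n k * F P 0 (k + d) :=
          tri (fun l d => P n l * F P 0 (l + d)) n
      _ = ∑ l ∈ Finset.range n, P n l * ∑ d ∈ Finset.range (n - l), F P 0 (l + d) := by
          apply Finset.sum_congr rfl
          intro l _
          rw [Finset.mul_sum]
  have hD : ∀ l, l ≤ n → u P l + ∑ d ∈ Finset.range (n - l), F P 0 (l + d) = u P n := by
    intro l hl
    have : ∑ d ∈ Finset.range (n - l), F P 0 (l + d)
        = ∑ k ∈ Finset.Ico l n, F P 0 k := by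
      rw [Finset.sum_Ico_eq_sum_range]
    rw [this, u, u, Finset.range_eq_Ico, Finset.range_eq_Ico]
    exact Finset.sum_Ico_consecutive (F P 0) (Nat.zero_le l) hl
  have hkey := key0 P hP hup n hn
  calc ∑ j ∈ Finset.range (n + 2), P n j * u P j
      = (∑ j ∈ Finset.range n, P n j * u P j) + P n n * u P n
          + P n (n + 1) * u P (n + 1) := by
        rw [Finset.sum_range_succ, Finset.sum_range_succ]
    _ = (∑ j ∈ Finset.range n, P n j * u P j) + P n n * u P n
          + (P n (n + 1) * u P n
            + ∑ l ∈ Finset.range n, P n l * ∑ d ∈ Finset.range (n - l), F P 0 (l + d)) := by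
        rw [u_succ, mul_add, hkey, hS2]
    _ = (∑ l ∈ Finset.range n,
            (P n l * u P l + P n l * ∑ d ∈ Finset.range (n - l), F P 0 (l + d)))
          + P n n * u P n + P n (n + 1) * u P n := by
        rw [Finset.sum_add_distrib]; ring
    _ = (∑ l ∈ Finset.range n, P n l * u P n) + P n n * u P n + P n (n + 1) * u P n := by
        congr 1; congr 1
        apply Finset.sum_congr rfl
        intro l hl
        rw [← mul_add, hD l (Finset.mem_range.mp hl).le]
    _ = (∑ j ∈ Finset.range (n + 2), P n j) * u P n := by
        rw [Finset.sum_range_succ, Finset.sum_range_succ, add_mul, add_mul, Finset.sum_mul]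
    _ = u P n := by rw [rowsum_fin P hP hup n, one_mul]

/-! ### The kernel killed at 0 -/

noncomputable def Q (P : ℕ → ℕ → ℝ≥0∞) (i j : ℕ) : ℝ≥0∞ :=
  if i = 0 ∨ j = 0 then 0 else P i j

noncomputable def e (P : ℕ → ℕ → ℝ≥0∞) (i : ℕ) : ℝ≥0∞ :=
  if i = 0 then 0 else P i 0

noncomputable def act (M : ℕ → ℕ → ℝ≥0∞) (v : ℕ → ℝ≥0∞) (i : ℕ) : ℝ≥0∞ :=
  ∑' j : ℕ, M i j * v j

lemma Q_col (P : ℕ → ℕ → ℝ≥0∞) (i : ℕ) : Q P i 0 = 0 := by simp [Q]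

lemma Q_row (P : ℕ → ℕ → ℝ≥0∞) (j : ℕ) : Q P 0 j = 0 := by simp [Q]

lemma Q_eq (P : ℕ → ℕ → ℝ≥0∞) (i j : ℕ) (hi : i ≠ 0) (hj : j ≠ 0) :
    Q P i j = P i j := by simp [Q, hi, hj]

lemma matPowQ_col (P : ℕ → ℕ → ℝ≥0∞) (k i : ℕ) (hi : i ≠ 0) :
    matPow (Q P) k i 0 = 0 := by
  cases k with
  | zero => simp [matPow_zero, hi]
  | succ k =>
    rw [matPow_succ]
    have h : ∀ l, matPow (Q P) k i l * Q P l 0 = 0 := fun l => by rw [Q_col, mul_zero]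
    rw [tsum_congr h, tsum_zero]

lemma act_zero_eq (M : ℕ → ℕ → ℝ≥0∞) (v : ℕ → ℝ≥0∞) (i : ℕ) :
    act (matPow M 0) v i = v i := by
  unfold act
  simp only [matPow_zero]
  exact tsum_ite_one v i

lemma act_succ_left (M : ℕ → ℕ → ℝ≥0∞) (v : ℕ → ℝ≥0∞) (k i : ℕ) :
    act (matPow M (k + 1)) v i = ∑' l : ℕ, M i l * act (matPow M k) v l := by
  unfold act
  have h1 : ∀ j, matPow M (k + 1) i j * v j
      = ∑' l : ℕ, M i l * matPow M k l j * v j := by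
    intro j; rw [matPow_succ_left, ENNReal.tsum_mul_right]
  rw [tsum_congr h1, ENNReal.tsum_comm]
  apply tsum_congr
  intro l
  rw [← ENNReal.tsum_mul_left]
  exact tsum_congr fun j => by ring

lemma act_e_zero (P : ℕ → ℕ → ℝ≥0∞) (k : ℕ) :
    act (matPow (Q P) k) (e P) 0 = 0 := by
  cases k with
  | zero => rw [act_zero_eq]; simp [e]
  | succ k =>
    rw [act_succ_left]
    have h : ∀ l, Q P 0 l * act (matPow (Q P) k) (e P) l = 0 :=
      fun l => by rw [Q_row, zero_mul]
    rw [tsum_congr h, tsum_zero]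

lemma rowQ (P : ℕ → ℕ → ℝ≥0∞) (hP : IsTransitionMatrix P) (l : ℕ) (hl : l ≠ 0) :
    (∑' j : ℕ, Q P l j) + P l 0 = 1 := by
  have h0 : ∑' j : ℕ, Q P l j = ∑' j : ℕ, P l (j + 1) := by
    rw [tsum_eq_zero_add' ENNReal.summable, Q_col, zero_add]
    exact tsum_congr fun j => Q_eq P l (j + 1) hl (Nat.succ_ne_zero j)
  have h1 : P l 0 + ∑' j : ℕ, P l (j + 1) = 1 := by
    rw [← tsum_eq_zero_add' ENNReal.summable]
    exact hP l
  rw [h0, add_comm]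
  exact h1

noncomputable def sk (P : ℕ → ℕ → ℝ≥0∞) (k i : ℕ) : ℝ≥0∞ :=
  ∑' j : ℕ, matPow (Q P) k i j

noncomputable def ak (P : ℕ → ℕ → ℝ≥0∞) (k i : ℕ) : ℝ≥0∞ :=
  ∑ m ∈ Finset.range k, act (matPow (Q P) m) (e P) i

lemma sk_ak (P : ℕ → ℕ → ℝ≥0∞) (hP : IsTransitionMatrix P) :
    ∀ k i, i ≠ 0 → sk P k i + ak P k i = 1 := by
  intro k
  induction k with
  | zero =>
    intro i hi
    unfold sk ak
    rw [tsum_eq_single i]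
    · simp [matPow_zero]
    · intro j hj; simp [matPow_zero, Ne.symm hj]
  | succ k ih =>
    intro i hi
    have hstep : sk P (k + 1) i + act (matPow (Q P) k) (e P) i = sk P k i := by
      have h1 : sk P (k + 1) i = ∑' l : ℕ, matPow (Q P) k i l * ∑' j : ℕ, Q P l j := by
        unfold sk
        have h2 : ∀ j, matPow (Q P) (k + 1) i j = ∑' l, matPow (Q P) k i l * Q P l j :=
          fun j => matPow_succ (Q P) k i j
        rw [tsum_congr h2, ENNReal.tsum_comm]
        exact tsum_congr fun l => ENNReal.tsum_mul_left
      have h3 : act (matPow (Q P) k) (e P) i = ∑' l : ℕ, matPow (Q P) k i l * e P l := rfl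
      rw [h1, h3, ← ENNReal.tsum_add]
      have hterm : ∀ l : ℕ, matPow (Q P) k i l * (∑' j : ℕ, Q P l j)
          + matPow (Q P) k i l * e P l = matPow (Q P) k i l := ?_
      · rw [tsum_congr hterm]; rfl
      intro l
      rcases eq_or_ne l 0 with h | h
      · subst h
        rw [matPowQ_col P k i hi]
        simp
      · rw [← mul_add]
        have h4 : (∑' j : ℕ, Q P l j) + e P l = 1 := by
          rw [show e P l = P l 0 by simp [e, h]]
          exact rowQ P hP l h
        rw [h4, mul_one]
    have hak : ak P (k + 1) i = ak P k i + act (matPow (Q P) k) (e P) i := by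
      rw [ak, ak, Finset.sum_range_succ]
    calc sk P (k + 1) i + ak P (k + 1) i
        = (sk P (k + 1) i + act (matPow (Q P) k) (e P) i) + ak P k i := by
          rw [hak]; ring
      _ = sk P k i + ak P k i := by rw [hstep]
      _ = 1 := ih i hi

noncomputable def aa (P : ℕ → ℕ → ℝ≥0∞) (i : ℕ) : ℝ≥0∞ :=
  ∑' m : ℕ, act (matPow (Q P) m) (e P) i

lemma aa_zero (P : ℕ → ℕ → ℝ≥0∞) : aa P 0 = 0 := by
  unfold aa
  rw [tsum_congr (act_e_zero P)]
  simp

lemma aa_eq_sup (P : ℕ → ℕ → ℝ≥0∞) (i : ℕ) : aa P i = ⨆ k, ak P k i :=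
  ENNReal.tsum_eq_iSup_nat

lemma aa_le_one (P : ℕ → ℕ → ℝ≥0∞) (hP : IsTransitionMatrix P) (i : ℕ) :
    aa P i ≤ 1 := by
  rcases eq_or_ne i 0 with h | h
  · rw [h, aa_zero]; exact zero_le_one
  · rw [aa_eq_sup]
    apply iSup_le
    intro k
    calc ak P k i ≤ sk P k i + ak P k i := le_add_self
      _ = 1 := sk_ak P hP k i h

lemma aa_rec (P : ℕ → ℕ → ℝ≥0∞) (i : ℕ) :
    aa P i = e P i + ∑' l : ℕ, Q P i l * aa P l := by
  rw [aa, tsum_eq_zero_add' ENNReal.summable, act_zero_eq]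
  congr 1
  have h1 : ∀ m, act (matPow (Q P) (m + 1)) (e P) i
      = ∑' l : ℕ, Q P i l * act (matPow (Q P) m) (e P) l :=
    fun m => act_succ_left (Q P) (e P) m i
  rw [tsum_congr h1, ENNReal.tsum_comm]
  exact tsum_congr fun l => ENNReal.tsum_mul_left

/-! ### The harmonic functions `hfun` and `w` -/

noncomputable def hfun (P : ℕ → ℕ → ℝ≥0∞) (i : ℕ) : ℝ≥0∞ :=
  if i = 0 then 1 else aa P i

lemma hfun_le_one (P : ℕ → ℕ → ℝ≥0∞) (hP : IsTransitionMatrix P) (i : ℕ) :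
    hfun P i ≤ 1 := by
  unfold hfun
  split
  · exact le_rfl
  · exact aa_le_one P hP i

lemma hfun_harm (P : ℕ → ℕ → ℝ≥0∞) (i : ℕ) (hi : i ≠ 0) :
    ∑' j : ℕ, P i j * hfun P j = hfun P i := by
  rw [tsum_eq_zero_add' ENNReal.summable]
  have h1 : ∀ j : ℕ, P i (j + 1) * hfun P (j + 1) = Q P i (j + 1) * aa P (j + 1) := by
    intro j
    rw [Q_eq P i (j + 1) hi (Nat.succ_ne_zero j), hfun, if_neg (Nat.succ_ne_zero j)]
  rw [tsum_congr h1]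
  have h2 : ∑' j : ℕ, Q P i (j + 1) * aa P (j + 1) = ∑' l : ℕ, Q P i l * aa P l := by
    rw [tsum_eq_zero_add' (f := fun l => Q P i l * aa P l) ENNReal.summable, Q_col, zero_mul,
      zero_add]
  rw [h2, hfun, if_pos rfl, mul_one, show P i 0 = e P i by simp [e, hi], ← aa_rec,
    hfun, if_neg hi]

noncomputable def w (P : ℕ → ℕ → ℝ≥0∞) (i : ℕ) : ℝ≥0∞ := 1 - hfun P i

lemma w_zero (P : ℕ → ℕ → ℝ≥0∞) : w P 0 = 0 := by simp [w, hfun]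

lemma w_le_one (P : ℕ → ℕ → ℝ≥0∞) (i : ℕ) : w P i ≤ 1 := tsub_le_self

lemma hw_add (P : ℕ → ℕ → ℝ≥0∞) (hP : IsTransitionMatrix P) (i : ℕ) :
    hfun P i + w P i = 1 :=
  add_tsub_cancel_of_le (hfun_le_one P hP i)

lemma w_harm (P : ℕ → ℕ → ℝ≥0∞) (hP : IsTransitionMatrix P) (i : ℕ) (hi : i ≠ 0) :
    ∑' j : ℕ, P i j * w P j = w P i := by
  have h1 : (∑' j : ℕ, P i j * hfun P j) + ∑' j : ℕ, P i j * w P j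
      = hfun P i + w P i := by
    rw [← ENNReal.tsum_add, hw_add P hP i]
    calc ∑' j : ℕ, (P i j * hfun P j + P i j * w P j)
        = ∑' j : ℕ, P i j * (hfun P j + w P j) := tsum_congr fun j => (mul_add _ _ _).symm
      _ = ∑' j : ℕ, P i j := tsum_congr fun j => by rw [hw_add P hP j, mul_one]
      _ = 1 := hP i
  rw [hfun_harm P i hi] at h1
  exact (ENNReal.add_right_inj (fun h => by
    simpa [h] using hfun_le_one P hP i)).mp h1

lemma w_harm_fin (P : ℕ → ℕ → ℝ≥0∞) (hP : IsTransitionMatrix P)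
    (hup : UpwardSkipFree P) (n : ℕ) (hn : n ≠ 0) :
    ∑ j ∈ Finset.range (n + 2), P n j * w P j = w P n := by
  rw [← row_fin P hup n (w P)]
  exact w_harm P hP n hn

lemma w_eq_u (P : ℕ → ℕ → ℝ≥0∞) (hP : IsTransitionMatrix P)
    (hup : UpwardSkipFree P) : ∀ n, w P n = w P 1 * u P n := by
  intro n
  induction n using Nat.strong_induction_on with
  | _ n ih =>
    match n, ih with
    | 0, _ => rw [w_zero, u_zero, mul_zero]
    | 1, _ => rw [u_one, mul_one]
    | (n + 2), ih =>
      have hw := w_harm_fin P hP hup (n + 1) (Nat.succ_ne_zero n)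
      have hu := u_harm P hP hup (n + 1) (Nat.succ_pos n)
      rw [show n + 1 + 2 = (n + 2) + 1 from rfl, Finset.sum_range_succ] at hw hu
      -- hw : ∑_{j<n+2} P (n+1) j * w j + P (n+1) (n+2) * w (n+2) = w (n+1)
      -- hu : ∑_{j<n+2} P (n+1) j * u j + P (n+1) (n+2) * u (n+2) = u (n+1)
      have hC : ∑ j ∈ Finset.range (n + 2), P (n + 1) j * w P j
          = w P 1 * ∑ j ∈ Finset.range (n + 2), P (n + 1) j * u P j := by
        rw [Finset.mul_sum]
        apply Finset.sum_congr rfl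
        intro j hj
        rw [ih j (Finset.mem_range.mp hj)]
        ring
      have hfin : w P 1 * ∑ j ∈ Finset.range (n + 2), P (n + 1) j * u P j ≠ ∞ := by
        apply ENNReal.mul_ne_top
        · exact fun h => by simpa [h] using w_le_one P 1
        · have : ∑ j ∈ Finset.range (n + 2), P (n + 1) j * u P j ≤ u P (n + 1) := by
            rw [← hu]; exact le_self_add
          exact (this.trans_lt (u_lt_top P hP hup (n + 1))).ne
      have heq : w P 1 * ∑ j ∈ Finset.range (n + 2), P (n + 1) j * u P j
            + P (n + 1) (n + 2) * w P (n + 2)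
          = w P 1 * ∑ j ∈ Finset.range (n + 2), P (n + 1) j * u P j
            + P (n + 1) (n + 2) * (w P 1 * u P (n + 2)) := by
        calc w P 1 * ∑ j ∈ Finset.range (n + 2), P (n + 1) j * u P j
              + P (n + 1) (n + 2) * w P (n + 2)
            = ∑ j ∈ Finset.range (n + 2), P (n + 1) j * w P j
              + P (n + 1) (n + 2) * w P (n + 2) := by rw [hC]
          _ = w P (n + 1) := hw
          _ = w P 1 * u P (n + 1) := ih (n + 1) (by omega)
          _ = w P 1 * (∑ j ∈ Finset.range (n + 2), P (n + 1) j * u P j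
              + P (n + 1) (n + 2) * u P (n + 2)) := by rw [hu]
          _ = w P 1 * ∑ j ∈ Finset.range (n + 2), P (n + 1) j * u P j
              + P (n + 1) (n + 2) * (w P 1 * u P (n + 2)) := by ring
      have hcancel := (ENNReal.add_right_inj hfin).mp heq
      exact (ENNReal.mul_right_inj (hup.1 (n + 1)).ne' (P_diag_ne_top P hP (n + 1))).mp
        hcancel

/-! ### Renewal theory at state 0 -/

noncomputable def f (P : ℕ → ℕ → ℝ≥0∞) : ℕ → ℝ≥0∞
  | 0 => P 0 0
  | k + 1 => ∑' l : ℕ, P 0 l * act (matPow (Q P) k) (e P) l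

noncomputable def r (P : ℕ → ℕ → ℝ≥0∞) : ℝ≥0∞ := P 0 0 + P 0 1 * aa P 1

lemma P01_sum (P : ℕ → ℕ → ℝ≥0∞) (hP : IsTransitionMatrix P)
    (hup : UpwardSkipFree P) : P 0 0 + P 0 1 = 1 := by
  have := rowsum_fin P hP hup 0
  simpa [Finset.sum_range_succ] using this

lemma r_le_one (P : ℕ → ℕ → ℝ≥0∞) (hP : IsTransitionMatrix P)
    (hup : UpwardSkipFree P) : r P ≤ 1 := by
  calc r P ≤ P 0 0 + P 0 1 * 1 :=
        add_le_add_right (mul_le_mul_right (aa_le_one P hP 1) _) _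
    _ = 1 := by rw [mul_one, P01_sum P hP hup]

lemma tsum_f (P : ℕ → ℕ → ℝ≥0∞) (hup : UpwardSkipFree P) :
    ∑' k : ℕ, f P k = r P := by
  rw [tsum_eq_zero_add' ENNReal.summable]
  have h0 : f P 0 = P 0 0 := rfl
  have h1 : ∀ k : ℕ, f P (k + 1) = ∑' l : ℕ, P 0 l * act (matPow (Q P) k) (e P) l :=
    fun k => rfl
  rw [h0, tsum_congr h1, ENNReal.tsum_comm]
  have h2 : ∀ l : ℕ, ∑' k : ℕ, P 0 l * act (matPow (Q P) k) (e P) l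
      = P 0 l * aa P l := fun l => ENNReal.tsum_mul_left
  rw [tsum_congr h2]
  have h3 : ∑' l : ℕ, P 0 l * aa P l = P 0 1 * aa P 1 := by
    apply tsum_eq_single
    intro l hl
    rcases Nat.eq_zero_or_pos l with h | h
    · subst h; rw [aa_zero, mul_zero]
    · have : (0 : ℕ) + 2 ≤ l := by omega
      rw [hup.2 0 l this, zero_mul]
  rw [h3, r]

lemma act_eQ_succ (P : ℕ → ℕ → ℝ≥0∞) (k j : ℕ) (hj : j ≠ 0) :
    act (matPow (Q P) (k + 1)) (e P) j
      = ∑' l : ℕ, P j (l + 1) * act (matPow (Q P) k) (e P) (l + 1) := by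
  rw [act_succ_left, tsum_eq_zero_add' ENNReal.summable, Q_col, zero_mul, zero_add]
  exact tsum_congr fun l => by rw [Q_eq P j (l + 1) hj (Nat.succ_ne_zero l)]

/-- First passage decomposition. -/
lemma fp (P : ℕ → ℕ → ℝ≥0∞) : ∀ m j, j ≠ 0 →
    matPow P (m + 1) j 0
      = ∑ k ∈ Finset.range (m + 1),
          act (matPow (Q P) k) (e P) j * matPow P (m - k) 0 0 := by
  intro m
  induction m with
  | zero =>
    intro j hj
    rw [matPow_one, Finset.sum_range_one, act_zero_eq]
    rw [Nat.sub_zero, matPow_zero, if_pos rfl, mul_one]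
    simp [e, hj]
  | succ m ih =>
    intro j hj
    rw [matPow_succ_left, tsum_eq_zero_add' ENNReal.summable]
    have h1 : ∀ l : ℕ, P j (l + 1) * matPow P (m + 1) (l + 1) 0
        = ∑ k ∈ Finset.range (m + 1),
            P j (l + 1) * (act (matPow (Q P) k) (e P) (l + 1) * matPow P (m - k) 0 0) := by
      intro l
      rw [ih (l + 1) (Nat.succ_ne_zero l), Finset.mul_sum]
    rw [tsum_congr h1, Summable.tsum_finsetSum (fun k _ => ENNReal.summable)]
    have h2 : ∀ k ∈ Finset.range (m + 1),
        ∑' l : ℕ, P j (l + 1) * (act (matPow (Q P) k) (e P) (l + 1) * matPow P (m - k) 0 0)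
          = act (matPow (Q P) (k + 1)) (e P) j * matPow P (m - k) 0 0 := by
      intro k _
      rw [act_eQ_succ P k j hj, ← ENNReal.tsum_mul_right]
      exact tsum_congr fun l => by ring
    rw [Finset.sum_congr rfl h2]
    rw [Finset.sum_range_succ' (fun k =>
      act (matPow (Q P) k) (e P) j * matPow P (m + 1 - k) 0 0) (m + 1), add_comm]
    congr 1
    · apply Finset.sum_congr rfl
      intro k _
      rw [show m + 1 - (k + 1) = m - k by omega]
    · rw [act_zero_eq, Nat.sub_zero]
      simp [e, hj]

/-- First return decomposition at 0. -/
lemma T_rec (P : ℕ → ℕ → ℝ≥0∞) : ∀ m,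
    matPow P (m + 1) 0 0
      = ∑ k ∈ Finset.range (m + 1), f P k * matPow P (m - k) 0 0 := by
  intro m
  cases m with
  | zero =>
    rw [matPow_one, Finset.sum_range_one, show f P 0 = P 0 0 from rfl, Nat.sub_zero,
      matPow_zero, if_pos rfl, mul_one]
  | succ m =>
    rw [matPow_succ_left, tsum_eq_zero_add' ENNReal.summable]
    have h1 : ∀ l : ℕ, P 0 (l + 1) * matPow P (m + 1) (l + 1) 0
        = ∑ k ∈ Finset.range (m + 1),
            P 0 (l + 1) * (act (matPow (Q P) k) (e P) (l + 1) * matPow P (m - k) 0 0) := by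
      intro l
      rw [fp P m (l + 1) (Nat.succ_ne_zero l), Finset.mul_sum]
    rw [tsum_congr h1, Summable.tsum_finsetSum (fun k _ => ENNReal.summable)]
    have h2 : ∀ k ∈ Finset.range (m + 1),
        ∑' l : ℕ, P 0 (l + 1) * (act (matPow (Q P) k) (e P) (l + 1) * matPow P (m - k) 0 0)
          = f P (k + 1) * matPow P (m - k) 0 0 := by
      intro k _
      have hsplit : f P (k + 1)
          = ∑' l : ℕ, P 0 (l + 1) * act (matPow (Q P) k) (e P) (l + 1) := by
        rw [show f P (k + 1) = ∑' l : ℕ, P 0 l * act (matPow (Q P) k) (e P) l from rfl,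
          tsum_eq_zero_add' ENNReal.summable, act_e_zero, mul_zero, zero_add]
      rw [hsplit, ← ENNReal.tsum_mul_right]
      exact tsum_congr fun l => by ring
    rw [Finset.sum_congr rfl h2]
    rw [Finset.sum_range_succ' (fun k => f P k * matPow P (m + 1 - k) 0 0) (m + 1), add_comm]
    congr 1
    exact Finset.sum_congr rfl fun k _ => by rw [show m + 1 - (k + 1) = m - k by omega]

/-- Cauchy-product style identity for triangle tsums. -/
lemma tsum_triangle (g : ℕ → ℕ → ℝ≥0∞) :
    ∑' m : ℕ, ∑ k ∈ Finset.range (m + 1), g k (m - k) = ∑' k : ℕ, ∑' d : ℕ, g k d := by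
  have h1 : ∀ m : ℕ, ∑ k ∈ Finset.range (m + 1), g k (m - k)
      = ∑' k : ℕ, (if k ≤ m then g k (m - k) else 0) := by
    intro m
    have hside : ∀ k ∉ Finset.range (m + 1), (if k ≤ m then g k (m - k) else 0) = 0 := by
      intro k hk
      have hk' : ¬ k ≤ m := fun h => hk (Finset.mem_range.mpr (by omega))
      rw [if_neg hk']
    rw [tsum_eq_sum hside]
    apply Finset.sum_congr rfl
    intro k hk
    rw [if_pos (by have := Finset.mem_range.mp hk; omega)]
  rw [tsum_congr h1, ENNReal.tsum_comm]
  apply tsum_congr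
  intro k
  have hinj : Function.Injective (fun d : ℕ => d + k) := add_left_injective k
  have hsupp : Function.support (fun m : ℕ => if k ≤ m then g k (m - k) else 0)
      ⊆ Set.range (fun d : ℕ => d + k) := by
    intro m hm
    rcases le_or_gt k m with h | h
    · exact ⟨m - k, by simpa using Nat.sub_add_cancel h⟩
    · exfalso
      apply hm
      show (if k ≤ m then g k (m - k) else 0) = 0
      rw [if_neg (by omega)]
  rw [← Function.Injective.tsum_eq hinj hsupp]
  apply tsum_congr
  intro d
  show (if k ≤ d + k then g k (d + k - k) else 0) = g k d
  rw [if_pos le_add_self, Nat.add_sub_cancel]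

lemma green_eq (P : ℕ → ℕ → ℝ≥0∞) (hup : UpwardSkipFree P) :
    green P 0 0 = 1 + r P * green P 0 0 := by
  have hL : green P 0 0 = 1 + ∑' m : ℕ, matPow P (m + 1) 0 0 := by
    rw [green, tsum_eq_zero_add' ENNReal.summable]
    congr 1
  have hR : ∑' m : ℕ, matPow P (m + 1) 0 0 = r P * green P 0 0 := by
    rw [tsum_congr (T_rec P), tsum_triangle (fun k d => f P k * matPow P d 0 0)]
    have h2 : ∀ k : ℕ, ∑' d : ℕ, f P k * matPow P d 0 0 = f P k * green P 0 0 :=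
      fun k => by rw [ENNReal.tsum_mul_left]; rfl
    rw [tsum_congr h2, ENNReal.tsum_mul_right, tsum_f P hup]
  conv_lhs => rw [hL, hR]

lemma Sbound (P : ℕ → ℕ → ℝ≥0∞) (hP : IsTransitionMatrix P)
    (hup : UpwardSkipFree P) (hr : r P < 1) (N : ℕ) :
    ∑ m ∈ Finset.range N, matPow P m 0 0 ≤ (1 - r P)⁻¹ := by
  set S : ℕ → ℝ≥0∞ := fun N => ∑ m ∈ Finset.range N, matPow P m 0 0 with hS
  have hSmono : ∀ {a b : ℕ}, a ≤ b → S a ≤ S b := by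
    intro a b hab
    exact Finset.sum_le_sum_of_subset (Finset.range_subset_range.mpr hab)
  have hSfin : ∀ n, S n ≠ ∞ := by
    intro n
    apply (ENNReal.sum_lt_top.mpr fun m _ =>
      (entry_le_one P hP m 0 0).trans_lt ENNReal.one_lt_top).ne
  have hmain : ∀ n, S n ≤ (1 - r P)⁻¹ := by
    intro n
    cases n with
    | zero => simp [hS]
    | succ N =>
      have hA : ∑ m ∈ Finset.range N, matPow P (m + 1) 0 0 ≤ r P * S (N + 1) := by
        calc ∑ m ∈ Finset.range N, matPow P (m + 1) 0 0
            = ∑ m ∈ Finset.range N, ∑ k ∈ Finset.range (m + 1),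
                f P k * matPow P (m - k) 0 0 :=
              Finset.sum_congr rfl fun m _ => T_rec P m
          _ = ∑ k ∈ Finset.range N, ∑ d ∈ Finset.range (N - k),
                f P k * matPow P d 0 0 := tri (fun k d => f P k * matPow P d 0 0) N
          _ = ∑ k ∈ Finset.range N, f P k * S (N - k) := by
              apply Finset.sum_congr rfl
              intro k _
              rw [Finset.mul_sum]
          _ ≤ ∑ k ∈ Finset.range N, f P k * S (N + 1) := by
              apply Finset.sum_le_sum
              intro k _
              exact mul_le_mul_right (hSmono (by omega)) _
          _ = (∑ k ∈ Finset.range N, f P k) * S (N + 1) := by rw [Finset.sum_mul]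
          _ ≤ r P * S (N + 1) := by
              apply mul_le_mul_left
              rw [← tsum_f P hup]
              exact ENNReal.sum_le_tsum _
      have hx : S (N + 1) ≤ 1 + r P * S (N + 1) := by
        calc S (N + 1) = matPow P 0 0 0 + ∑ m ∈ Finset.range N, matPow P (m + 1) 0 0 := by
              simp only [hS]
              rw [Finset.sum_range_succ' (fun m => matPow P m 0 0) N, add_comm]
          _ = 1 + ∑ m ∈ Finset.range N, matPow P (m + 1) 0 0 := by
              rw [matPow_zero]; simp
          _ ≤ 1 + r P * S (N + 1) := add_le_add_right hA _
      -- from x ≤ 1 + r x with x ≠ ∞, r < 1 conclude x ≤ (1-r)⁻¹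
      set x := S (N + 1) with hxdef
      have hsplit : (1 - r P) * x + r P * x = x := by
        rw [← add_mul, tsub_add_cancel_of_le hr.le, one_mul]
      have h5 : (1 - r P) * x + r P * x ≤ 1 + r P * x := by
        rw [hsplit]; exact hx
      have hrx : r P * x ≠ ∞ :=
        ENNReal.mul_ne_top (hr.trans ENNReal.one_lt_top).ne (hSfin (N + 1))
      have h6 : (1 - r P) * x ≤ 1 := by
        exact (ENNReal.add_le_add_iff_right hrx).mp h5
      calc x = (1 - r P)⁻¹ * ((1 - r P) * x) := by
            rw [← mul_assoc, ENNReal.inv_mul_cancel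
              (tsub_pos_of_lt hr).ne' (by
                exact (tsub_le_self.trans_lt ENNReal.one_lt_top).ne), one_mul]
        _ ≤ (1 - r P)⁻¹ * 1 := mul_le_mul_right h6 _
        _ = (1 - r P)⁻¹ := mul_one _
  exact hmain N

lemma green00_lt_top (P : ℕ → ℕ → ℝ≥0∞) (hP : IsTransitionMatrix P)
    (hup : UpwardSkipFree P) (hr : r P < 1) : green P 0 0 < ∞ := by
  rw [green, ENNReal.tsum_eq_iSup_nat]
  apply lt_of_le_of_lt (iSup_le fun N => Sbound P hP hup hr N)
  exact ENNReal.inv_lt_top.mpr (tsub_pos_of_lt hr)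

/-! ### Transfer by irreducibility -/

lemma transfer (P : ℕ → ℕ → ℝ≥0∞) (hP : IsTransitionMatrix P) (hirr : MCIrreducible P)
    (hG : green P 0 0 < ∞) (i j : ℕ) : green P i j < ∞ := by
  obtain ⟨k, hk⟩ := hirr 0 i
  obtain ⟨m, hm⟩ := hirr j 0
  set c : ℝ≥0∞ := matPow P k 0 i * matPow P m j 0 with hc
  have hc0 : c ≠ 0 := mul_ne_zero hk.ne' hm.ne'
  have hkey : ∀ n, c * matPow P n i j ≤ matPow P (k + (n + m)) 0 0 := by
    intro n
    have h1 : matPow P (k + (n + m)) 0 0 = ∑' l : ℕ, matPow P k 0 l * matPow P (n + m) l 0 :=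
      matPow_add P k (n + m) 0 0
    have h2 : matPow P (n + m) i 0 = ∑' l : ℕ, matPow P n i l * matPow P m l 0 :=
      matPow_add P n m i 0
    calc c * matPow P n i j
        = matPow P k 0 i * (matPow P n i j * matPow P m j 0) := by rw [hc]; ring
      _ ≤ matPow P k 0 i * matPow P (n + m) i 0 := by
          apply mul_le_mul_right
          rw [h2]
          exact ENNReal.le_tsum j
      _ ≤ matPow P (k + (n + m)) 0 0 := by
          rw [h1]
          exact ENNReal.le_tsum i
  have h3 : c * green P i j ≤ green P 0 0 := by
    rw [green, ← ENNReal.tsum_mul_left]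
    calc ∑' n : ℕ, c * matPow P n i j
        ≤ ∑' n : ℕ, matPow P (k + (n + m)) 0 0 := ENNReal.tsum_le_tsum hkey
      _ ≤ green P 0 0 := by
          rw [green]
          exact ENNReal.tsum_comp_le_tsum_of_injective
            (f := fun n : ℕ => k + (n + m)) (fun a b hab => by
              dsimp only at hab; omega)
            (fun s => matPow P s 0 0)
  calc green P i j = c⁻¹ * (c * green P i j) := by
        rw [← mul_assoc, ENNReal.inv_mul_cancel hc0
          (by
            rw [hc]
            exact ENNReal.mul_ne_top
              (fun h => by simpa [h] using entry_le_one P hP k 0 i)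
              (fun h => by simpa [h] using entry_le_one P hP m j 0)), one_mul]
    _ ≤ c⁻¹ * green P 0 0 := mul_le_mul_right h3 _
    _ < ∞ := ENNReal.mul_lt_top (ENNReal.inv_ne_top.mpr hc0).lt_top hG

/-! ### `u` is invariant for the killed kernel -/

lemma Qu_eq (P : ℕ → ℕ → ℝ≥0∞) (hP : IsTransitionMatrix P) (hup : UpwardSkipFree P)
    (l : ℕ) : ∑' j : ℕ, Q P l j * u P j = u P l := by
  rcases eq_or_ne l 0 with h | h
  · subst h
    rw [u_zero]
    have h0 : ∀ j, Q P 0 j * u P j = 0 := fun j => by rw [Q_row, zero_mul]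
    rw [tsum_congr h0, tsum_zero]
  · have h1 : ∀ j, Q P l j * u P j = P l j * u P j := by
      intro j
      rcases eq_or_ne j 0 with hj | hj
      · rw [hj, u_zero, mul_zero, mul_zero]
      · rw [Q_eq P l j h hj]
    rw [tsum_congr h1, row_fin P hup l (u P), u_harm P hP hup l (Nat.pos_of_ne_zero h)]

lemma Qku_eq (P : ℕ → ℕ → ℝ≥0∞) (hP : IsTransitionMatrix P) (hup : UpwardSkipFree P) :
    ∀ k l, act (matPow (Q P) k) (u P) l = u P l := by
  intro k
  induction k with
  | zero => intro l; exact act_zero_eq _ _ l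
  | succ k ih =>
    intro l
    rw [act_succ_left]
    have h1 : ∀ i, Q P l i * act (matPow (Q P) k) (u P) i = Q P l i * u P i :=
      fun i => by rw [ih i]
    rw [tsum_congr h1, Qu_eq P hP hup l]

end USF

theorem upward_skip_free_transient_iff
    (P : ℕ → ℕ → ℝ≥0∞) (hP : IsTransitionMatrix P) (hirr : MCIrreducible P)
    (hup : UpwardSkipFree P) :
    (∀ i j : ℕ, green P i j < ∞) ↔ ∑' n : ℕ, F P 0 n < ∞ := by
  open USF in
  constructor
  · -- transient → sum finite
    intro hG
    have hG00 := hG 0 0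
    have hgr := green_eq P hup
    have hrlt : r P < 1 := by
      rcases lt_or_eq_of_le (r_le_one P hP hup) with h | h
      · exact h
      · exfalso
        rw [h, one_mul] at hgr
        have h1 : green P 0 0 + 0 = green P 0 0 + 1 := by
          rw [add_zero]
          conv_lhs => rw [hgr]
          rw [add_comm]
        exact zero_ne_one ((ENNReal.add_right_inj hG00.ne).mp h1)
    have ha1 : aa P 1 < 1 := by
      by_contra hcon
      push_neg at hcon
      have h2 : (1 : ℝ≥0∞) ≤ r P := by
        calc (1 : ℝ≥0∞) = P 0 0 + P 0 1 := (P01_sum P hP hup).symm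
          _ = P 0 0 + P 0 1 * 1 := by rw [mul_one]
          _ ≤ P 0 0 + P 0 1 * aa P 1 := add_le_add_right (mul_le_mul_right hcon _) _
          _ = r P := rfl
      exact absurd hrlt (not_lt.mpr h2)
    have hw1pos : w P 1 ≠ 0 := by
      have h3 : hfun P 1 = aa P 1 := by rw [hfun, if_neg one_ne_zero]
      rw [w, h3]
      exact (tsub_pos_of_lt ha1).ne'
    have hw1top : w P 1 ≠ ∞ := fun h => by simpa [h] using w_le_one P 1
    have hb : ∀ N, u P N ≤ (w P 1)⁻¹ := by
      intro N
      have h1 : w P 1 * u P N ≤ 1 := by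
        rw [← w_eq_u P hP hup N]; exact w_le_one P N
      calc u P N = (w P 1)⁻¹ * (w P 1 * u P N) := by
            rw [← mul_assoc, ENNReal.inv_mul_cancel hw1pos hw1top, one_mul]
        _ ≤ (w P 1)⁻¹ * 1 := mul_le_mul_right h1 _
        _ = (w P 1)⁻¹ := mul_one _
    rw [ENNReal.tsum_eq_iSup_nat]
    exact lt_of_le_of_lt (iSup_le fun N => hb N)
      (ENNReal.inv_lt_top.mpr (pos_iff_ne_zero.mpr hw1pos))
  · -- sum finite → transient
    intro hM
    set M : ℝ≥0∞ := ∑' n : ℕ, F P 0 n with hMdef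
    have hMne : M ≠ ∞ := hM.ne
    have hM1 : (1 : ℝ≥0∞) ≤ M := by
      rw [hMdef]
      calc (1 : ℝ≥0∞) = F P 0 0 := (F_base P).symm
        _ ≤ ∑' n : ℕ, F P 0 n := ENNReal.le_tsum 0
    have hM0 : M ≠ 0 := fun h => by simp [h] at hM1
    have hu_le : ∀ N, u P N ≤ M := fun N => by
      rw [hMdef]; exact ENNReal.sum_le_tsum _
    have hsk : ∀ k, (1 : ℝ≥0∞) ≤ M * sk P k 1 := by
      intro k
      have h1 : (1 : ℝ≥0∞) = act (matPow (Q P) k) (u P) 1 := by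
        rw [Qku_eq P hP hup k 1, u_one]
      rw [h1]
      calc act (matPow (Q P) k) (u P) 1
          ≤ ∑' j : ℕ, matPow (Q P) k 1 j * M := by
            apply ENNReal.tsum_le_tsum
            intro j
            exact mul_le_mul_right (hu_le j) _
        _ = sk P k 1 * M := by rw [ENNReal.tsum_mul_right]; rfl
        _ = M * sk P k 1 := mul_comm _ _
    have hskinv : ∀ k, M⁻¹ ≤ sk P k 1 := by
      intro k
      calc M⁻¹ = M⁻¹ * 1 := (mul_one _).symm
        _ ≤ M⁻¹ * (M * sk P k 1) := mul_le_mul_right (hsk k) _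
        _ = sk P k 1 := by rw [← mul_assoc, ENNReal.inv_mul_cancel hM0 hMne, one_mul]
    have hak : ∀ k, ak P k 1 ≤ 1 - M⁻¹ := by
      intro k
      have h1 : ak P k 1 + M⁻¹ ≤ 1 := by
        calc ak P k 1 + M⁻¹ ≤ ak P k 1 + sk P k 1 := add_le_add_right (hskinv k) _
          _ = 1 := by rw [add_comm]; exact sk_ak P hP k 1 one_ne_zero
      exact ENNReal.le_sub_of_add_le_right (ENNReal.inv_ne_top.mpr hM0) h1
    have ha1 : aa P 1 < 1 := by
      have h1 : aa P 1 ≤ 1 - M⁻¹ := by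
        rw [aa_eq_sup]
        exact iSup_le hak
      exact lt_of_le_of_lt h1 (ENNReal.sub_lt_self ENNReal.one_ne_top one_ne_zero
        (ENNReal.inv_ne_zero.mpr hMne))
    have hrlt : r P < 1 := by
      have h2 : P 0 1 * aa P 1 < P 0 1 * 1 :=
        (ENNReal.mul_lt_mul_iff_right (hup.1 0).ne'
          (fun h => by simpa [h] using P_le_one P hP 0 1)).mpr ha1
      calc r P < P 0 0 + P 0 1 * 1 := by
            rw [r]
            exact (ENNReal.add_lt_add_iff_left
              (fun h => by simpa [h] using P_le_one P hP 0 0)).mpr h2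
        _ = 1 := by rw [mul_one]; exact P01_sum P hP hup
    intro i j
    exact transfer P hP hirr (green00_lt_top P hP hup hrlt) i j
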